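/- arXiv:2407.07109 — 4 statements merged into one kernel-verified Lean document; each statement's English description precedes it below -/
import Mathlib

section
/- Let θ_n be the acute angle of the n-th triangle of the Fibonacci–Theodorus spiral opposite the leg of length √F_n, so that sin θ_n = √(F_n / F_{n+2}), i.e., θ_n = arcsin(√(F_n / F_{n+2})). Then the limit of θ_n as n → ∞ equals arcsin(1/φ) (the arccosecant of φ). -/
open Real Filter

/-- The golden ratio φ = (1+√5)/2. -/
noncomputable def phi : ℝ := (1 + Real.sqrt 5) / 2

/-- The acute angle of the n-th triangle of the Fibonacci–Theodorus spiral
opposite the leg √(F n), i.e. θ n = arcsin (√(F n / F (n+2))). -/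
noncomputable def theta (n : ℕ) : ℝ :=
  Real.arcsin (Real.sqrt ((Nat.fib n : ℝ) / (Nat.fib (n + 2) : ℝ)))

open goldenRatio in
lemma fib_ratio_tendsto :
    Filter.Tendsto (fun n => (Nat.fib n : ℝ) / (Nat.fib (n + 2) : ℝ)) atTop
      (nhds (1 / φ ^ 2)) := by
  have hφ : (0:ℝ) < φ := goldenRatio_pos
  have hr : |ψ / φ| < 1 := by
    rw [abs_div, abs_of_pos hφ, div_lt_one hφ, abs_of_neg goldenConj_neg]
    nlinarith [goldenConj_neg, neg_one_lt_goldenConj, one_lt_goldenRatio]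
  have h0 : Filter.Tendsto (fun n : ℕ => (ψ / φ) ^ n) atTop (nhds 0) :=
    tendsto_pow_atTop_nhds_zero_of_abs_lt_one hr
  have key0 : Filter.Tendsto
      (fun n : ℕ => (1 - (ψ / φ) ^ n) / (φ ^ 2 - ψ ^ 2 * (ψ / φ) ^ n)) atTop
      (nhds ((1 - 0) / (φ ^ 2 - ψ ^ 2 * 0))) :=
    Filter.Tendsto.div (tendsto_const_nhds.sub h0)
      (tendsto_const_nhds.sub (tendsto_const_nhds.mul h0))
      (by rw [mul_zero, sub_zero]; positivity)
  have key : Filter.Tendsto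
      (fun n : ℕ => (1 - (ψ / φ) ^ n) / (φ ^ 2 - ψ ^ 2 * (ψ / φ) ^ n)) atTop
      (nhds (1 / φ ^ 2)) := by
    rw [mul_zero, sub_zero, sub_zero] at key0
    exact key0
  refine key.congr fun n => ?_
  have hfib : (0:ℝ) < (Nat.fib (n + 2) : ℝ) := by
    exact_mod_cast Nat.fib_pos.2 (Nat.succ_pos _)
  have hden : φ ^ (n + 2) - ψ ^ (n + 2) ≠ 0 := by
    intro h
    rw [Real.coe_fib_eq, h, zero_div] at hfib
    exact lt_irrefl 0 hfib
  have hs5 : Real.sqrt 5 ≠ 0 := by positivity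
  have hφn : (φ:ℝ) ^ n ≠ 0 := pow_ne_zero _ (ne_of_gt hφ)
  have hnum : 1 - (ψ / φ) ^ n = (φ ^ n - ψ ^ n) / φ ^ n := by
    rw [div_pow]; field_simp
  have hden2 : φ ^ 2 - ψ ^ 2 * (ψ / φ) ^ n = (φ ^ (n + 2) - ψ ^ (n + 2)) / φ ^ n := by
    rw [eq_div_iff hφn, sub_mul, div_pow ψ φ n, mul_assoc, div_mul_cancel₀ _ hφn]; ring
  rw [Real.coe_fib_eq, Real.coe_fib_eq, div_div_div_cancel_right₀ hs5,
    hnum, hden2, div_div_div_cancel_right₀ hφn]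

theorem angle_tendsto_arccsc_goldenRatio :
    Filter.Tendsto theta Filter.atTop (nhds (Real.arcsin (1 / phi))) := by
  have hφ : (0:ℝ) < goldenRatio := goldenRatio_pos
  have hphi : phi = goldenRatio := rfl
  have h1 : Real.sqrt (1 / goldenRatio ^ 2) = 1 / goldenRatio := by
    rw [one_div, one_div, Real.sqrt_inv, Real.sqrt_sq hφ.le]
  have h := (Real.continuous_arcsin.continuousAt.comp
    (Real.continuous_sqrt.continuousAt)).tendsto.comp fib_ratio_tendsto
  have h2 : (Real.arcsin ∘ fun x => Real.sqrt x) (1 / goldenRatio ^ 2)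
      = Real.arcsin (1 / goldenRatio) := by
    simp only [Function.comp]; rw [h1]
  rw [h2] at h
  rw [hphi]
  exact h.congr fun n => rfl
end

section
/- For every positive integer n, the inequality −1/√(5 φ^5) ≤ ∑_{k=1}^{n} (−1)^{k+1} φ^{((−1)^k − k)} / √(5φ) holds. -/
open Real Finset

lemma sqrt5_sq : Real.sqrt 5 ^ 2 = 5 := Real.sq_sqrt (by norm_num)

lemma phi_pos : 0 < phi := by
  have h : 0 < Real.sqrt 5 := Real.sqrt_pos.mpr (by norm_num)
  unfold phi; linarith

lemma phi_sq : phi ^ 2 = phi + 1 := by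
  have h := sqrt5_sq
  unfold phi; nlinarith

lemma sum_eq (n : ℕ) (hn : 1 ≤ n) :
    ∑ k ∈ Finset.Icc 1 n, (-1 : ℝ) ^ (k + 1) * phi ^ ((-1 : ℝ) ^ k - (k : ℝ)) =
      -phi ^ (-2 : ℝ) +
        (if Even n then phi ^ (-(n : ℝ) - 2) else 2 * phi ^ (-(n : ℝ) - 1)) := by
  induction n with
  | zero => omega
  | succ m ih =>
    have hp := phi_pos
    have hps := phi_sq
    have hadd : ∀ a b : ℝ, phi ^ (a + b) = phi ^ a * phi ^ b :=
      fun a b => Real.rpow_add hp a b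
    have h1' : phi ^ (-1 : ℝ) = phi⁻¹ := Real.rpow_neg_one phi
    have h2 : phi ^ (-2 : ℝ) = (phi ^ 2)⁻¹ := by
      rw [show (-2:ℝ) = -(2:ℕ) by norm_num, Real.rpow_neg hp.le, Real.rpow_natCast]
    have h3 : phi ^ (-3 : ℝ) = (phi ^ 3)⁻¹ := by
      rw [show (-3:ℝ) = -(3:ℕ) by norm_num, Real.rpow_neg hp.le, Real.rpow_natCast]
    rcases Nat.eq_or_lt_of_le hn with h1 | h1
    · -- m + 1 = 1, i.e. m = 0
      have hm : m = 0 := by omega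
      subst hm
      rw [if_neg (by decide : ¬ Even (0 + 1))]
      rw [show Finset.Icc 1 (0+1) = {1} from rfl, Finset.sum_singleton]
      push_cast
      rw [show ((-1:ℝ)) ^ (1+1) = 1 by norm_num, show ((-1:ℝ)) ^ 1 = -1 by norm_num]
      ring
    · have hm : 1 ≤ m := by omega
      rw [Finset.sum_Icc_succ_top (by omega : 1 ≤ m + 1), ih hm]
      rcases Nat.even_or_odd m with he | ho
      · -- m even, m+1 odd
        have ho1 : ¬ Even (m + 1) := by simp [Nat.even_add_one, he]
        rw [if_pos he, if_neg ho1]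
        have hs1 : (-1 : ℝ) ^ (m + 1) = -1 := Odd.neg_one_pow (by simpa [Nat.odd_add_one] using he)
        have hs2 : (-1 : ℝ) ^ (m + 1 + 1) = 1 := by rw [pow_succ, hs1]; norm_num
        rw [hs1, hs2]
        push_cast
        rw [show (-1 - ((m:ℝ) + 1)) = -(m:ℝ) - 2 by ring,
            show (-((m:ℝ) + 1) - 1) = -(m:ℝ) - 2 by ring]
        ring
      · -- m odd, m+1 even
        have he1 : Even (m + 1) := Odd.add_one ho
        rw [if_neg (Nat.not_even_iff_odd.mpr ho), if_pos he1]
        have hs1 : (-1 : ℝ) ^ (m + 1) = 1 := Even.neg_one_pow he1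
        have hs2 : (-1 : ℝ) ^ (m + 1 + 1) = -1 := by rw [pow_succ, hs1]; norm_num
        rw [hs1, hs2]
        push_cast
        rw [show (1 - ((m:ℝ) + 1)) = -(m:ℝ) by ring,
            show (-(m:ℝ) - 1) = -(m:ℝ) + (-1) by ring,
            show (-((m:ℝ) + 1) - 2) = -(m:ℝ) + (-3) by ring,
            hadd, hadd, h1', h3]
        have key : 2 * phi⁻¹ - 1 = (phi ^ 3)⁻¹ := by
          field_simp
          nlinarith [hps, hp]
        linear_combination (phi ^ (-(m:ℝ))) * key

theorem neg_le_sum_alternating_powers :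
    ∀ n : ℕ, 0 < n →
      -1 / Real.sqrt (5 * phi ^ 5) ≤
        ∑ k ∈ Finset.Icc 1 n,
          (-1 : ℝ) ^ (k + 1) * phi ^ ((-1 : ℝ) ^ k - (k : ℝ)) / Real.sqrt (5 * phi) := by
  intro n hn
  have hp := phi_pos
  have hps := phi_sq
  have hst : 0 < Real.sqrt (5 * phi) := Real.sqrt_pos.mpr (by positivity)
  have h2 : phi ^ (-2 : ℝ) = (phi ^ 2)⁻¹ := by
    rw [show (-2:ℝ) = -(2:ℕ) by norm_num, Real.rpow_neg hp.le, Real.rpow_natCast]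
  have hsq : Real.sqrt (5 * phi ^ 5) = Real.sqrt (5 * phi) * phi ^ 2 := by
    rw [show 5 * phi ^ 5 = (5 * phi) * (phi ^ 2) ^ 2 by ring,
        Real.sqrt_mul (by positivity), Real.sqrt_sq (by positivity)]
  rw [← Finset.sum_div, sum_eq n hn, hsq]
  have step1 : -1 / (Real.sqrt (5 * phi) * phi ^ 2) = -phi ^ (-2:ℝ) / Real.sqrt (5 * phi) := by
    rw [h2]; field_simp
  rw [step1, div_le_div_iff_of_pos_right hst]
  have hpos : (0:ℝ) < (if Even n then phi ^ (-(n : ℝ) - 2) else 2 * phi ^ (-(n : ℝ) - 1)) := by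
    split
    · exact Real.rpow_pos_of_pos hp _
    · positivity
  linarith
end

section
/- Let A_i = √(F_i · F_{i+1}) / 2. Then for every positive integer n, | ∑_{i=1}^{n} A_i − (√φ / 2)(F_{n+2} − 1) | ≤ 1/4. -/
open Real Finset

/-- Area of the n-th triangle of the Fibonacci–Theodorus spiral,
`A n = √(F n · F (n+1)) / 2`. -/
noncomputable def A (n : ℕ) : ℝ := Real.sqrt (Nat.fib n * Nat.fib (n + 1)) / 2

namespace SumAreasAux

noncomputable def psi : ℝ := (1 - Real.sqrt 5) / 2

lemma sqrt5_sq : Real.sqrt 5 ^ 2 = 5 := Real.sq_sqrt (by norm_num)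

lemma sqrt5_lb : (2.2 : ℝ) ≤ Real.sqrt 5 := by
  have := Real.sqrt_le_sqrt (show (4.84:ℝ) ≤ 5 by norm_num)
  rwa [show (4.84:ℝ) = 2.2^2 by norm_num, Real.sqrt_sq (by norm_num)] at this

lemma sqrt5_ub : Real.sqrt 5 ≤ (2.3 : ℝ) := by
  have := Real.sqrt_le_sqrt (show (5:ℝ) ≤ 5.29 by norm_num)
  rwa [show (5.29:ℝ) = 2.3^2 by norm_num, Real.sqrt_sq (by norm_num)] at this

lemma phi_lb : (1.6 : ℝ) ≤ phi := by unfold phi; linarith [sqrt5_lb]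
lemma phi_ub : phi ≤ (1.65 : ℝ) := by unfold phi; linarith [sqrt5_ub]
lemma phi_pos : (0:ℝ) < phi := by linarith [phi_lb]
lemma one_lt_phi : (1:ℝ) < phi := by linarith [phi_lb]

lemma phi_sq : phi ^ 2 = phi + 1 := by
  unfold phi
  have h := sqrt5_sq
  ring_nf
  nlinarith [h]

lemma psi_eq : psi = 1 - phi := by unfold psi phi; ring

lemma phi_mul_psi : phi * psi = -1 := by
  unfold phi psi
  nlinarith [sqrt5_sq]

lemma psi_neg : psi < 0 := by rw [psi_eq]; linarith [one_lt_phi]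

lemma abs_psi : |psi| = phi - 1 := by
  rw [abs_of_neg psi_neg, psi_eq]; ring

lemma phi_mul_phi_sub_one : phi * (phi - 1) = 1 := by nlinarith [phi_sq]

lemma sqrt_phi_lb : (1.2 : ℝ) ≤ Real.sqrt phi := by
  have := Real.sqrt_le_sqrt (show (1.44:ℝ) ≤ phi by linarith [phi_lb])
  rwa [show (1.44:ℝ) = 1.2^2 by norm_num, Real.sqrt_sq (by norm_num)] at this

lemma sqrt_phi_ub : Real.sqrt phi ≤ (1.3 : ℝ) := by
  have := Real.sqrt_le_sqrt (show phi ≤ 1.69 by linarith [phi_ub])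
  rwa [show (1.69:ℝ) = 1.3^2 by norm_num, Real.sqrt_sq (by norm_num)] at this

lemma sqrt_phi_sq : Real.sqrt phi ^ 2 = phi := Real.sq_sqrt phi_pos.le

/-- Binet-type identity. -/
lemma binet_diff : ∀ i : ℕ, (Nat.fib (i + 1) : ℝ) - phi * Nat.fib i = psi ^ i := by
  intro i
  induction i using Nat.twoStepInduction with
  | zero => simp
  | one => simp [psi_eq]
  | more i ih1 ih2 =>
    have hrec : (Nat.fib (i + 2) : ℝ) = Nat.fib (i+1) + Nat.fib i := by
      rw [Nat.fib_add_two]; push_cast; ring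
    have hrec' : (Nat.fib (i + 3) : ℝ) = Nat.fib (i+2) + Nat.fib (i+1) := by
      rw [show i + 3 = (i+1) + 2 by ring, Nat.fib_add_two]; push_cast; ring
    have hpsi2 : psi ^ 2 = psi + 1 := by
      rw [psi_eq]; nlinarith [phi_sq]
    calc (Nat.fib (i + 2 + 1) : ℝ) - phi * Nat.fib (i + 2)
        = ((Nat.fib (i+2) : ℝ) - phi * Nat.fib (i+1)) + ((Nat.fib (i+1) : ℝ) - phi * Nat.fib i) := by
          rw [hrec', hrec]; ring
      _ = psi ^ (i+1) + psi ^ i := by rw [ih2, ih1]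
      _ = psi ^ (i + 2) := by rw [pow_add, pow_add, hpsi2]; ring

noncomputable def g (i : ℕ) : ℝ :=
  Real.sqrt (Nat.fib i * Nat.fib (i + 1)) - Real.sqrt phi * Nat.fib i

noncomputable def D (i : ℕ) : ℝ :=
  Real.sqrt (Nat.fib i * Nat.fib (i + 1)) + Real.sqrt phi * Nat.fib i

lemma fib_real_pos {i : ℕ} (hi : 1 ≤ i) : (0:ℝ) < Nat.fib i := by
  exact_mod_cast Nat.fib_pos.mpr hi

lemma sqrt_fib_pos {i : ℕ} (hi : 1 ≤ i) :
    0 < Real.sqrt (Nat.fib i * Nat.fib (i + 1)) := by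
  apply Real.sqrt_pos.mpr
  have h1 := fib_real_pos hi
  have h2 := fib_real_pos (show 1 ≤ i + 1 by omega)
  positivity

lemma D_pos {i : ℕ} (hi : 1 ≤ i) : 0 < D i := by
  have h1 := sqrt_fib_pos hi
  have h2 := fib_real_pos hi
  have h3 : (0:ℝ) < Real.sqrt phi := Real.sqrt_pos.mpr phi_pos
  unfold D; positivity

lemma g_mul_D (i : ℕ) : g i * D i = (Nat.fib i : ℝ) * psi ^ i := by
  have h1 : Real.sqrt (Nat.fib i * Nat.fib (i + 1)) ^ 2 = (Nat.fib i : ℝ) * Nat.fib (i+1) := by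
    apply Real.sq_sqrt; positivity
  have h2 : (Real.sqrt phi * Nat.fib i) ^ 2 = phi * (Nat.fib i:ℝ)^2 := by
    rw [mul_pow, sqrt_phi_sq]
  have key : g i * D i = (Nat.fib i : ℝ) * Nat.fib (i+1) - phi * (Nat.fib i:ℝ)^2 := by
    unfold g D
    nlinarith [h1, h2]
  rw [key, ← binet_diff i]; ring

lemma g_eq (i : ℕ) (hi : 1 ≤ i) : g i = (Nat.fib i : ℝ) * psi ^ i / D i := by
  rw [← g_mul_D i]; field_simp [(D_pos hi).ne']

lemma abs_g (i : ℕ) (hi : 1 ≤ i) : |g i| = (Nat.fib i : ℝ) * (phi - 1) ^ i / D i := by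
  rw [g_eq i hi, abs_div, abs_of_pos (D_pos hi), abs_mul, abs_pow, abs_psi,
    abs_of_pos (fib_real_pos hi)]

lemma g_sign (i : ℕ) (hi : 1 ≤ i) :
    (Odd i → g i ≤ 0) ∧ (Even i → 0 ≤ g i) := by
  have hD := D_pos hi
  have hf := fib_real_pos hi
  constructor
  · intro hodd
    have : psi ^ i < 0 := Odd.pow_neg hodd psi_neg
    rw [g_eq i hi]
    apply div_nonpos_of_nonpos_of_nonneg _ hD.le
    nlinarith
  · intro heven
    have : 0 ≤ psi ^ i := heven.pow_nonneg psi
    rw [g_eq i hi]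
    positivity

/-- fib (i+1) ≤ 2 * fib i for i ≥ 1 -/
lemma fib_succ_le (i : ℕ) (hi : 1 ≤ i) : (Nat.fib (i+1) : ℝ) ≤ 2 * Nat.fib i := by
  cases i with
  | zero => omega
  | succ j =>
    have : Nat.fib (j + 1 + 1) ≤ 2 * Nat.fib (j + 1) := by
      rw [Nat.fib_add_two]
      have := Nat.fib_le_fib_succ (n := j)
      omega
    exact_mod_cast this

lemma fib_mono (i : ℕ) : (Nat.fib i : ℝ) ≤ Nat.fib (i+1) := by
  have h : Nat.fib i ≤ Nat.fib (i+1) := Nat.fib_le_fib_succ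
  exact_mod_cast h

/-- key magnitude inequality: fib(i+1) * D i ≤ phi * fib i * D (i+1) -/
lemma key_ineq (i : ℕ) (hi : 1 ≤ i) :
    (Nat.fib (i+1) : ℝ) * D i ≤ phi * Nat.fib i * D (i+1) := by
  set x : ℝ := (Nat.fib i : ℝ) with hx
  set y : ℝ := (Nat.fib (i+1) : ℝ) with hy
  set z : ℝ := (Nat.fib (i+2) : ℝ) with hz
  have hxpos : 0 < x := fib_real_pos hi
  have hypos : 0 < y := fib_real_pos (by omega)
  have hxy : x ≤ y := fib_mono i
  have hyz : y ≤ z := fib_mono (i+1)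
  have hy2x : y ≤ 2 * x := fib_succ_le i hi
  have hsp := sqrt_phi_lb
  have hsp' := sqrt_phi_ub
  have hphi := phi_lb
  -- √(xy) ≤ √2 * x ≤ 1.42 * x
  have h1 : Real.sqrt (x * y) ≤ 1.42 * x := by
    have ha : Real.sqrt (x * y) ≤ Real.sqrt (2 * x^2) := by
      apply Real.sqrt_le_sqrt; nlinarith
    apply ha.trans
    have hb : Real.sqrt (2 * x^2) ≤ Real.sqrt ((1.42 * x)^2) := by
      apply Real.sqrt_le_sqrt; nlinarith [sq_nonneg x]
    rwa [Real.sqrt_sq (by positivity)] at hb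
  -- √(yz) ≥ y
  have h2 : y ≤ Real.sqrt (y * z) := by
    have := Real.sqrt_le_sqrt (show y * y ≤ y * z by nlinarith)
    rwa [Real.sqrt_mul_self hypos.le] at this
  have hL : y * D i ≤ 2.72 * (x * y) := by
    have ha : Real.sqrt phi * x ≤ 1.3 * x := mul_le_mul_of_nonneg_right hsp' hxpos.le
    have hb : Real.sqrt (x * y) + Real.sqrt phi * x ≤ 2.72 * x := by linarith
    unfold D
    rw [← hx, ← hy]
    calc y * (Real.sqrt (x * y) + Real.sqrt phi * x)
        ≤ y * (2.72 * x) := mul_le_mul_of_nonneg_left hb hypos.le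
      _ = 2.72 * (x * y) := by ring
  have hR : (3.52:ℝ) * (x * y) ≤ phi * x * D (i+1) := by
    have hc : (1.2:ℝ) * y ≤ Real.sqrt phi * y := mul_le_mul_of_nonneg_right hsp hypos.le
    have hDlb : (2.2:ℝ) * y ≤ Real.sqrt (y * z) + Real.sqrt phi * y := by linarith
    have hxphi : (1.6:ℝ) * x ≤ phi * x := mul_le_mul_of_nonneg_right hphi hxpos.le
    unfold D
    rw [← hy, ← hz]
    calc (3.52:ℝ) * (x * y) = (1.6 * x) * (2.2 * y) := by ring
      _ ≤ (phi * x) * (Real.sqrt (y * z) + Real.sqrt phi * y) := by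
          apply mul_le_mul hxphi hDlb (by nlinarith) (by nlinarith)
      _ = phi * x * (Real.sqrt (y * z) + Real.sqrt phi * y) := by ring
  calc y * D i ≤ 2.72 * (x * y) := hL
    _ ≤ 3.52 * (x * y) := by nlinarith [mul_pos hxpos hypos]
    _ ≤ phi * x * D (i+1) := hR

lemma abs_g_anti (i : ℕ) (hi : 1 ≤ i) : |g (i+1)| ≤ |g i| := by
  rw [abs_g i hi, abs_g (i+1) (by omega)]
  have hDi := D_pos hi
  have hDi1 := D_pos (show 1 ≤ i + 1 by omega)
  rw [div_le_div_iff₀ hDi1 hDi]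
  have hpow : (0:ℝ) < (phi - 1) ^ i := by
    have : (0:ℝ) < phi - 1 := by linarith [one_lt_phi]
    positivity
  have hkey := key_ineq i hi
  have hps : (phi - 1) ^ (i+1) = (phi - 1) * (phi - 1)^i := by ring
  have h1 : phi - 1 > 0 := by linarith [one_lt_phi]
  -- goal: fib(i+1) * (phi-1)^(i+1) * D i ≤ fib i * (phi-1)^i * D (i+1)
  have h := mul_le_mul_of_nonneg_right hkey (mul_nonneg h1.le hpow.le)
  calc (Nat.fib (i+1) : ℝ) * (phi - 1) ^ (i + 1) * D i
      = (Nat.fib (i+1) : ℝ) * D i * ((phi - 1) * (phi - 1)^i) := by rw [hps]; ring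
    _ ≤ phi * (Nat.fib i : ℝ) * D (i+1) * ((phi - 1) * (phi - 1)^i) := h
    _ = (phi * (phi - 1)) * ((Nat.fib i : ℝ) * D (i+1) * (phi - 1)^i) := by ring
    _ = (Nat.fib i : ℝ) * (phi - 1)^i * D (i+1) := by rw [phi_mul_phi_sub_one]; ring

noncomputable def S (n : ℕ) : ℝ := ∑ i ∈ Finset.Icc 1 n, g i

lemma S_succ (n : ℕ) : S (n+1) = S n + g (n+1) := by
  unfold S
  rw [← Finset.sum_Icc_succ_top (by omega : 1 ≤ n + 1)]

lemma g_pair_even (k : ℕ) (hk : 1 ≤ k) (hke : Even k) : 0 ≤ g k + g (k+1) := by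
  have h1 := (g_sign k hk).2 hke
  have h2 := (g_sign (k+1) (by omega)).1 (Even.add_one hke)
  have h3 := abs_g_anti k hk
  rw [abs_of_nonneg h1, abs_of_nonpos h2] at h3
  linarith

lemma g_pair_odd (k : ℕ) (hk : 1 ≤ k) (hko : Odd k) : g k + g (k+1) ≤ 0 := by
  have h1 := (g_sign k hk).1 hko
  have h2 := (g_sign (k+1) (by omega)).2 (Odd.add_one hko)
  have h3 := abs_g_anti k hk
  rw [abs_of_nonpos h1, abs_of_nonneg h2] at h3
  linarith

lemma S_bounds : ∀ k : ℕ, (g 1 ≤ S (2*k+1) ∧ S (2*k+1) ≤ 0) ∧ (g 1 ≤ S (2*k+2) ∧ S (2*k+2) ≤ 0) := by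
  intro k
  induction k with
  | zero =>
    have hS1 : S 1 = g 1 := by unfold S; simp
    have hS2 : S 2 = g 1 + g 2 := by
      have := S_succ 1
      rw [hS1] at this; exact this
    have hg1 : g 1 ≤ 0 := (g_sign 1 le_rfl).1 ⟨0, by ring⟩
    have hpair := g_pair_odd 1 le_rfl ⟨0, by ring⟩
    refine ⟨⟨by rw [hS1], by rw [hS1]; exact hg1⟩, ⟨?_, ?_⟩⟩
    · rw [hS2]
      have := (g_sign 2 (by norm_num)).2 ⟨1, by ring⟩
      linarith
    · rw [hS2]; linarith
  | succ k ih =>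
    obtain ⟨⟨ih1l, ih1u⟩, ⟨ih2l, ih2u⟩⟩ := ih
    have heq3 : 2*(k+1)+1 = (2*k+2)+1 := by ring
    have heq4 : 2*(k+1)+2 = (2*k+2)+2 := by ring
    have hS3 : S (2*(k+1)+1) = S (2*k+1) + (g (2*k+2) + g (2*k+3)) := by
      rw [heq3, S_succ, S_succ]; ring_nf
    have hS3' : S (2*(k+1)+1) = S (2*k+2) + g (2*k+3) := by
      rw [heq3, S_succ]
    have hS4 : S (2*(k+1)+2) = S (2*(k+1)+1) + g (2*k+4) := by
      rw [heq4, show (2*k+2)+2 = ((2*k+2)+1)+1 by ring, S_succ, heq3]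
    have hpair1 : 0 ≤ g (2*k+2) + g (2*k+3) := by
      have := g_pair_even (2*k+2) (by omega) ⟨k+1, by ring⟩
      convert this using 3 <;> omega
    have hpair2 : g (2*k+3) + g (2*k+4) ≤ 0 := by
      have := g_pair_odd (2*k+3) (by omega) ⟨k+1, by ring⟩
      convert this using 3 <;> omega
    have hg4 : 0 ≤ g (2*k+4) := (g_sign (2*k+4) (by omega)).2 ⟨k+2, by ring⟩
    have hg3 : g (2*k+3) ≤ 0 := (g_sign (2*k+3) (by omega)).1 ⟨k+1, by ring⟩
    constructor
    · constructor
      · rw [hS3]; linarith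
      · rw [hS3']; linarith
    · constructor
      · rw [hS4, hS3]; linarith
      · have hS4' : S (2*(k+1)+2) = S (2*k+2) + (g (2*k+3) + g (2*k+4)) := by
          rw [hS4, hS3']; ring
        rw [hS4']; linarith

lemma abs_S_le (n : ℕ) (hn : 1 ≤ n) : |S n| ≤ -(g 1) := by
  have hb : g 1 ≤ S n ∧ S n ≤ 0 := by
    rcases Nat.even_or_odd n with he | ho
    · obtain ⟨k, hk⟩ := he
      have hk1 : 1 ≤ k := by omega
      have : n = 2*(k-1)+2 := by omega
      rw [this]
      exact (S_bounds (k-1)).2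
    · obtain ⟨k, hk⟩ := ho
      have : n = 2*k+1 := by omega
      rw [this]
      exact (S_bounds k).1
  rw [abs_le]
  constructor <;> [skip; linarith [hb.1, hb.2]]
  have hg1 : g 1 ≤ 0 := (g_sign 1 le_rfl).1 ⟨0, by ring⟩
  linarith [hb.1]

lemma g_one : g 1 = 1 - Real.sqrt phi := by
  unfold g
  norm_num

lemma fib_sum_real : ∀ n : ℕ, ∑ i ∈ Finset.Icc 1 n, (Nat.fib i : ℝ) = Nat.fib (n+2) - 1 := by
  intro n
  induction n with
  | zero => simp
  | succ n ih =>
    rw [Finset.sum_Icc_succ_top (by omega : 1 ≤ n + 1), ih]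
    have h1 : (Nat.fib (n+1+2) : ℝ) = Nat.fib (n+2) + Nat.fib (n+1) := by
      rw [show n+1+2 = (n+1)+2 from rfl, Nat.fib_add_two]; push_cast; ring
    rw [h1]; ring

end SumAreasAux

open SumAreasAux in
theorem sum_areas_approx_fib :
    ∀ n : ℕ, 0 < n →
      |∑ i ∈ Finset.Icc 1 n, A i - Real.sqrt phi / 2 * ((Nat.fib (n + 2) : ℝ) - 1)| ≤ 1 / 4 := by
  intro n hn
  have hA : ∀ i : ℕ, A i = (g i + Real.sqrt phi * Nat.fib i) / 2 := by
    intro i; unfold A g; ring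
  have hsum : ∑ i ∈ Finset.Icc 1 n, A i
      = (S n + Real.sqrt phi * (Nat.fib (n+2) - 1)) / 2 := by
    unfold S
    rw [← fib_sum_real n]
    rw [Finset.sum_congr rfl (fun i _ => hA i)]
    rw [Finset.mul_sum, ← Finset.sum_add_distrib, ← Finset.sum_div]
  have key : ∑ i ∈ Finset.Icc 1 n, A i - Real.sqrt phi / 2 * ((Nat.fib (n + 2) : ℝ) - 1)
      = S n / 2 := by
    rw [hsum]; ring
  rw [key, abs_div]
  have hS := abs_S_le n hn
  rw [g_one] at hS
  have h1 := sqrt_phi_ub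
  have h2 := sqrt_phi_lb
  rw [abs_of_nonneg (by norm_num : (0:ℝ) ≤ 2)]
  have : |S n| ≤ 0.3 := by linarith
  linarith
end

section
/- Let Hn(n) = (1/2) ∑_{i=0}^{F_n − 1} √(F_{n+1} + i) denote the n-th Hahn area of the Theodorus spiral (the total area of the F_n consecutive triangles of the Theodorus spiral whose longer legs have lengths √F_{n+1}, √(F_{n+1}+1), …, √(F_{n+2}−1)). Then the limit as n → ∞ of Hn(n) / Hn(n−1) equals φ√φ = φ^{3/2}, where φ = (1+√5)/2. (This proves Hahn's conjecture.) -/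
open Real Filter Finset

/-- The n-th Hahn area of the Theodorus spiral:
`Hn n = (1/2) ∑_{i=0}^{F n - 1} √(F (n+1) + i)`. -/
noncomputable def Hn (n : ℕ) : ℝ :=
  (1 / 2) * ∑ i ∈ Finset.range (Nat.fib n), Real.sqrt ((Nat.fib (n + 1) : ℝ) + (i : ℝ))

namespace HahnAux

noncomputable def g (n : ℕ) : ℝ := (Nat.fib n : ℝ)
noncomputable def D (n : ℕ) : ℝ := g (n + 1) * Real.sqrt (g (n + 1))
noncomputable def S (n : ℕ) : ℝ :=
  ∑ i ∈ Finset.range (Nat.fib n), Real.sqrt (g (n + 1) + (i : ℝ))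
noncomputable def L (n : ℕ) : ℝ := S n / D n
noncomputable def q (n : ℕ) : ℝ := D (n + 1) / D n

lemma phi_eq : phi = goldenRatio := rfl

lemma one_le_g (n : ℕ) : (1 : ℝ) ≤ g (n + 1) := by
  have := Nat.fib_pos.mpr (Nat.succ_pos n)
  unfold g; exact_mod_cast this

lemma g_pos (n : ℕ) : 0 < g (n + 1) := lt_of_lt_of_le one_pos (one_le_g n)

lemma D_pos (n : ℕ) : 0 < D n :=
  mul_pos (g_pos n) (Real.sqrt_pos.mpr (g_pos n))

lemma g_add (n : ℕ) : g (n + 2) = g (n + 1) + (Nat.fib n : ℝ) := by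
  unfold g
  rw [Nat.fib_add_two]
  push_cast
  ring

/-- Key pointwise bound: for `x ≥ 0`,
`(3/2)√x ≤ (x+1)√(x+1) - x√x ≤ (3/2)√(x+1)`. -/
lemma key (x : ℝ) (hx : 0 ≤ x) :
    (3 / 2) * Real.sqrt x ≤ (x + 1) * Real.sqrt (x + 1) - x * Real.sqrt x ∧
    (x + 1) * Real.sqrt (x + 1) - x * Real.sqrt x ≤ (3 / 2) * Real.sqrt (x + 1) := by
  set u := Real.sqrt x with hu
  set v := Real.sqrt (x + 1) with hv
  have hu0 : 0 ≤ u := Real.sqrt_nonneg _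
  have hv0 : 0 ≤ v := Real.sqrt_nonneg _
  have hu2 : u ^ 2 = x := Real.sq_sqrt hx
  have hv2 : v ^ 2 = x + 1 := Real.sq_sqrt (by linarith)
  have huv : u ≤ v := Real.sqrt_le_sqrt (by linarith)
  have h1 : v ^ 2 = u ^ 2 + 1 := by rw [hu2, hv2]
  constructor
  · nlinarith [mul_nonneg (sub_nonneg.mpr huv) (mul_nonneg (sub_nonneg.mpr huv) (add_nonneg (add_nonneg hv0 hv0) hu0)), sq_nonneg (v - u)]
  · nlinarith [mul_nonneg (sub_nonneg.mpr huv) (mul_nonneg (sub_nonneg.mpr huv) (add_nonneg (add_nonneg hu0 hu0) hv0)), sq_nonneg (v - u)]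

/-- Telescoping integral-comparison bounds for the sum. -/
lemma sum_bounds (a : ℝ) (ha : 0 ≤ a) (m : ℕ) :
    (∑ i ∈ Finset.range m, Real.sqrt (a + (i : ℝ))) ≤
      (2 / 3) * ((a + m) * Real.sqrt (a + m) - a * Real.sqrt a) ∧
    (2 / 3) * ((a + m) * Real.sqrt (a + m) - a * Real.sqrt a) ≤
      (∑ i ∈ Finset.range m, Real.sqrt (a + (i : ℝ))) + Real.sqrt (a + m) - Real.sqrt a := by
  induction m with
  | zero => simp
  | succ m ih =>
    obtain ⟨ih1, ih2⟩ := ih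
    have hx : (0 : ℝ) ≤ a + m := by positivity
    obtain ⟨k1, k2⟩ := key (a + m) hx
    rw [Finset.sum_range_succ]
    push_cast
    have hcast : a + ((m : ℝ) + 1) = (a + m) + 1 := by ring
    rw [hcast]
    constructor
    · nlinarith [k1]
    · nlinarith [k2]

lemma goldenConj_abs_lt_one : |goldenConj| < 1 := by
  rw [abs_lt]
  exact ⟨neg_one_lt_goldenConj, goldenConj_neg.trans one_pos⟩

/-- Ratio of consecutive Fibonacci numbers tends to φ. -/
lemma fib_ratio_tendsto :
    Tendsto (fun n : ℕ => g (n + 2) / g (n + 1)) atTop (nhds phi) := by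
  have heq : ∀ n : ℕ, g (n + 2) / g (n + 1) =
      goldenRatio + goldenConj ^ (n + 1) / g (n + 1) := by
    intro n
    have h := fib_succ_sub_goldenRatio_mul_fib (n + 1)
    have hg : g (n + 1) ≠ 0 := ne_of_gt (g_pos n)
    have hgg : g (n + 2) = goldenRatio * g (n + 1) + goldenConj ^ (n + 1) := by
      unfold g; rw [show n + 2 = n + 1 + 1 from rfl]; linarith [h]
    rw [hgg, add_div, mul_div_assoc, div_self hg, mul_one]
  have h0 : Tendsto (fun n : ℕ => goldenConj ^ (n + 1) / g (n + 1)) atTop (nhds 0) := by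
    apply squeeze_zero_norm (a := fun n => |goldenConj| ^ (n + 1))
    · intro n
      have hnorm : ‖goldenConj ^ (n + 1) / g (n + 1)‖ = |goldenConj| ^ (n + 1) / g (n + 1) := by
        rw [norm_div, norm_pow, Real.norm_eq_abs, Real.norm_eq_abs, abs_of_pos (g_pos n)]
      rw [hnorm]
      exact div_le_self (by positivity) (one_le_g n)
    · have := tendsto_pow_atTop_nhds_zero_of_lt_one (abs_nonneg goldenConj) goldenConj_abs_lt_one
      exact this.comp (tendsto_add_atTop_nat 1)
  have hsum := (tendsto_const_nhds (x := goldenRatio) (f := atTop (α := ℕ))).add h0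
  rw [add_zero] at hsum
  rw [phi_eq]
  exact Tendsto.congr (fun n => (heq n).symm) hsum

lemma g_tendsto_atTop : Tendsto (fun n : ℕ => g (n + 1)) atTop atTop := by
  refine tendsto_atTop_mono' atTop ?_ (tendsto_natCast_atTop_atTop (R := ℝ))
  filter_upwards [eventually_ge_atTop 5] with n hn
  unfold g
  have : n ≤ Nat.fib (n + 1) := le_trans (Nat.le_fib_self hn) (Nat.fib_le_fib_succ)
  exact_mod_cast this

lemma phi_pos : 0 < phi := by rw [phi_eq]; exact goldenRatio_pos

lemma one_lt_phi : 1 < phi := by rw [phi_eq]; exact one_lt_goldenRatio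

noncomputable def c : ℝ := (2 / 3) * (phi * Real.sqrt phi - 1)

lemma one_lt_sqrt_phi : 1 < Real.sqrt phi := by
  rw [show (1:ℝ) = Real.sqrt 1 by simp]
  exact Real.sqrt_lt_sqrt (by norm_num) one_lt_phi

lemma c_pos : 0 < c := by
  unfold c
  nlinarith [one_lt_phi, one_lt_sqrt_phi]

lemma q_eq (n : ℕ) :
    q n = (g (n + 2) / g (n + 1)) * Real.sqrt (g (n + 2) / g (n + 1)) := by
  unfold q D
  rw [show n + 1 + 1 = n + 2 from rfl]
  rw [Real.sqrt_div (le_of_lt (g_pos (n + 1)))]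
  have h1 : g (n + 1) ≠ 0 := ne_of_gt (g_pos n)
  have h2 : Real.sqrt (g (n + 1)) ≠ 0 := ne_of_gt (Real.sqrt_pos.mpr (g_pos n))
  field_simp

lemma q_tendsto : Tendsto q atTop (nhds (phi * Real.sqrt phi)) := by
  have := fib_ratio_tendsto.mul fib_ratio_tendsto.sqrt
  exact Tendsto.congr (fun n => (q_eq n).symm) this

lemma q_identity (n : ℕ) : (2 / 3 : ℝ) * (q n - 1) * D n =
    (2 / 3) * (g (n + 2) * Real.sqrt (g (n + 2)) - g (n + 1) * Real.sqrt (g (n + 1))) := by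
  unfold q D
  rw [show n + 1 + 1 = n + 2 from rfl]
  have h1 : g (n + 1) ≠ 0 := ne_of_gt (g_pos n)
  have h2 : Real.sqrt (g (n + 1)) ≠ 0 := ne_of_gt (Real.sqrt_pos.mpr (g_pos n))
  field_simp

lemma L_tendsto : Tendsto L atTop (nhds c) := by
  have hub : ∀ n, L n ≤ (2 / 3) * (q n - 1) := by
    intro n
    obtain ⟨h1, _⟩ := sum_bounds (g (n + 1)) (le_of_lt (g_pos n)) (Nat.fib n)
    rw [← g_add] at h1
    unfold L S
    rw [div_le_iff₀ (D_pos n), q_identity]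
    exact h1
  have hlb : ∀ n, (2 / 3) * (q n - 1) -
      (Real.sqrt (g (n + 2)) - Real.sqrt (g (n + 1))) / D n ≤ L n := by
    intro n
    obtain ⟨_, h2⟩ := sum_bounds (g (n + 1)) (le_of_lt (g_pos n)) (Nat.fib n)
    rw [← g_add] at h2
    unfold L S
    rw [sub_le_iff_le_add, ← add_div, le_div_iff₀ (D_pos n), q_identity]
    linarith [h2]
  have hqt : Tendsto (fun n => (2 / 3 : ℝ) * (q n - 1)) atTop (nhds c) := by
    have h1 : Tendsto (fun _ : ℕ => (1:ℝ)) atTop (nhds 1) := tendsto_const_nhds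
    have := (q_tendsto.sub h1).const_mul (2/3 : ℝ)
    simpa [c] using this
  have het : Tendsto (fun n => (Real.sqrt (g (n + 2)) - Real.sqrt (g (n + 1))) / D n)
      atTop (nhds 0) := by
    have heq : ∀ n, (Real.sqrt (g (n + 2)) - Real.sqrt (g (n + 1))) / D n =
        (Real.sqrt (g (n + 2) / g (n + 1)) - 1) * (g (n + 1))⁻¹ := by
      intro n
      unfold D
      rw [Real.sqrt_div (le_of_lt (g_pos (n + 1)))]
      have h1 : g (n + 1) ≠ 0 := ne_of_gt (g_pos n)
      have h2 : Real.sqrt (g (n + 1)) ≠ 0 := ne_of_gt (Real.sqrt_pos.mpr (g_pos n))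
      have h3 : Real.sqrt (g (n + 1)) * Real.sqrt (g (n + 1)) = g (n + 1) :=
        Real.mul_self_sqrt (le_of_lt (g_pos n))
      rw [div_sub_one h2, div_eq_mul_inv, div_eq_mul_inv, mul_inv, ← h3, mul_inv]
      ring
    have hnum : Tendsto (fun n => Real.sqrt (g (n + 2) / g (n + 1)) - 1) atTop
        (nhds (Real.sqrt phi - 1)) := fib_ratio_tendsto.sqrt.sub tendsto_const_nhds
    have hden : Tendsto (fun n => (g (n + 1))⁻¹) atTop (nhds 0) :=
      g_tendsto_atTop.inv_tendsto_atTop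
    have hmul := hnum.mul hden
    rw [mul_zero] at hmul
    exact Tendsto.congr (fun n => (heq n).symm) hmul
  have hlow : Tendsto (fun n => (2 / 3 : ℝ) * (q n - 1) -
      (Real.sqrt (g (n + 2)) - Real.sqrt (g (n + 1))) / D n) atTop (nhds c) := by
    have := hqt.sub het
    simpa using this
  exact tendsto_of_tendsto_of_tendsto_of_le_of_le hlow hqt hlb hub

lemma S_pos (n : ℕ) (hn : 1 ≤ n) : 0 < S n := by
  unfold S
  apply Finset.sum_pos
  · intro i _
    apply Real.sqrt_pos.mpr
    have h1 := g_pos n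
    have h2 : (0:ℝ) ≤ (i:ℝ) := Nat.cast_nonneg i
    linarith
  · rw [Finset.nonempty_range_iff]
    exact (Nat.fib_pos.mpr hn).ne'

lemma S_eq (n : ℕ) : S n = 2 * Hn n := by
  unfold S Hn g; ring

end HahnAux

open HahnAux in
/-- Hahn's conjecture: the ratio of consecutive Hahn areas tends to φ√φ = φ^(3/2). -/
theorem hahn_conjecture :
    Filter.Tendsto (fun n : ℕ => Hn (n + 1) / Hn n) Filter.atTop
      (nhds (phi * Real.sqrt phi)) := by
  have hL1 : Tendsto (fun n => L (n + 1)) atTop (nhds c) :=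
    L_tendsto.comp (tendsto_add_atTop_nat 1)
  have hmain := (hL1.div L_tendsto (ne_of_gt c_pos)).mul q_tendsto
  rw [div_self (ne_of_gt c_pos), one_mul] at hmain
  refine Tendsto.congr' ?_ hmain
  filter_upwards [eventually_ge_atTop 1] with n hn
  simp only [Pi.div_apply]
  have hS : S n ≠ 0 := ne_of_gt (S_pos n hn)
  have hD : D n ≠ 0 := ne_of_gt (D_pos n)
  have hD1 : D (n + 1) ≠ 0 := ne_of_gt (D_pos (n + 1))
  have : L (n + 1) / L n * q n = S (n + 1) / S n := by
    unfold L q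
    field_simp
  rw [this, S_eq, S_eq, mul_div_mul_left _ _ (two_ne_zero)]
end
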